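/- Abel inverse relation: for sequences (a_n) and (b_n) in a commutative Q-algebra, a_n = sum_{j=0}^n binomial(n,j) (-j)^(n-j) b_j for all n if and only if b_n = sum_{j=0}^n binomial(n,j) * j * n^(n-j-1) * a_j for all n. -/

import Mathlib

open Finset

/-- The Abel coefficient `j·n^{n-j-1}`, interpreted as `1` when `j = n`
(including `n = 0`). -/
noncomputable def abelCoeff (n j : ℕ) : ℚ :=
  if j = n then 1 else (j : ℚ) * (n : ℚ) ^ (n - j - 1)


/-- m-th finite difference of a monomial of degree r < m vanishes. -/
lemma findiff_mono : ∀ r m : ℕ, r < m →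
    ∑ i ∈ range (m + 1), (m.choose i : ℚ) * (-1) ^ (m - i) * (i : ℚ) ^ r = 0 := by
  intro r
  induction r using Nat.strong_induction_on with
  | _ r IH =>
    intro m hrm
    match r with
    | 0 =>
      have h0 := add_pow (1:ℚ) (-1) m
      simp only [one_pow, one_mul] at h0
      have : ((1 : ℚ) + (-1)) ^ m = 0 := by
        rw [add_neg_cancel, zero_pow (by omega)]
      rw [this] at h0
      calc ∑ i ∈ range (m + 1), (m.choose i : ℚ) * (-1) ^ (m - i) * (i : ℚ) ^ 0
          = ∑ i ∈ range (m + 1), (-1 : ℚ) ^ (m - i) * m.choose i := by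
            apply Finset.sum_congr rfl; intro i _; ring
        _ = 0 := h0.symm
    | r + 1 =>
      obtain ⟨m', rfl⟩ : ∃ m', m = m' + 1 := ⟨m - 1, by omega⟩
      rw [Finset.sum_range_succ']
      simp only [Nat.cast_zero, zero_pow (Nat.succ_ne_zero r), mul_zero, add_zero]
      push_cast
      have key : ∀ i, ((m' + 1).choose (i + 1) : ℚ) * (i + 1 : ℚ) = (m' + 1) * (m'.choose i) := by
        intro i
        have := Nat.add_one_mul_choose_eq m' i
        have : ((m' + 1) * m'.choose i : ℕ) = ((m' + 1).choose (i + 1) * (i + 1) : ℕ) := this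
        exact_mod_cast this.symm
      calc ∑ i ∈ range (m' + 1), ((m' + 1).choose (i + 1) : ℚ) * (-1) ^ (m' - i) *
              ((i : ℚ) + 1) ^ (r + 1)
          = ∑ i ∈ range (m' + 1), ((m' + 1) : ℚ) * (m'.choose i : ℚ) * (-1) ^ (m' - i) *
              ((i : ℚ) + 1) ^ r := by
            apply Finset.sum_congr rfl; intro i hi
            rw [pow_succ ((i : ℚ) + 1) r]
            calc ((m' + 1).choose (i + 1) : ℚ) * (-1) ^ (m' - i) * (((i:ℚ)+1) ^ r * ((i:ℚ)+1))
                = (((m' + 1).choose (i + 1) : ℚ) * ((i:ℚ)+1)) * (-1) ^ (m' - i) * ((i:ℚ)+1) ^ r := by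
                  ring
              _ = ((m' + 1) : ℚ) * (m'.choose i : ℚ) * (-1) ^ (m' - i) * ((i : ℚ) + 1) ^ r := by
                  rw [key i]
        _ = ((m' + 1) : ℚ) * ∑ i ∈ range (m' + 1), (m'.choose i : ℚ) * (-1) ^ (m' - i) *
              ((i : ℚ) + 1) ^ r := by
            rw [Finset.mul_sum]; apply Finset.sum_congr rfl; intro i _; ring
        _ = 0 := by
            rw [mul_eq_zero]; right
            have expand : ∀ i : ℕ, ((i : ℚ) + 1) ^ r
                = ∑ s ∈ range (r + 1), (i : ℚ) ^ s * (r.choose s : ℚ) := by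
              intro i
              have := add_pow (i : ℚ) 1 r
              simpa using this
            calc ∑ i ∈ range (m' + 1), (m'.choose i : ℚ) * (-1) ^ (m' - i) * ((i : ℚ) + 1) ^ r
                = ∑ i ∈ range (m' + 1), ∑ s ∈ range (r + 1),
                    (r.choose s : ℚ) * ((m'.choose i : ℚ) * (-1) ^ (m' - i) * (i : ℚ) ^ s) := by
                  apply Finset.sum_congr rfl; intro i _
                  rw [expand i, Finset.mul_sum]
                  apply Finset.sum_congr rfl; intro s _; ring
              _ = ∑ s ∈ range (r + 1), (r.choose s : ℚ) *
                    ∑ i ∈ range (m' + 1), (m'.choose i : ℚ) * (-1) ^ (m' - i) * (i : ℚ) ^ s := by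
                  rw [Finset.sum_comm]
                  apply Finset.sum_congr rfl; intro s _
                  rw [Finset.mul_sum]
              _ = 0 := by
                  apply Finset.sum_eq_zero; intro s hs
                  rw [IH s (by simp at hs; omega) m' (by simp at hs; omega), mul_zero]

/-- shifted version -/
lemma findiff_shift (x : ℚ) (r m : ℕ) (hrm : r < m) :
    ∑ i ∈ range (m + 1), (m.choose i : ℚ) * (-1) ^ (m - i) * (x + (i : ℚ)) ^ r = 0 := by
  have expand : ∀ i : ℕ, (x + (i : ℚ)) ^ r
      = ∑ s ∈ range (r + 1), (i : ℚ) ^ s * x ^ (r - s) * (r.choose s : ℚ) := by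
    intro i
    have := add_pow (i : ℚ) x r
    rw [add_comm] at this
    exact this
  calc ∑ i ∈ range (m + 1), (m.choose i : ℚ) * (-1) ^ (m - i) * (x + (i : ℚ)) ^ r
      = ∑ i ∈ range (m + 1), ∑ s ∈ range (r + 1),
          (x ^ (r - s) * (r.choose s : ℚ)) * ((m.choose i : ℚ) * (-1) ^ (m - i) * (i : ℚ) ^ s) := by
        apply Finset.sum_congr rfl; intro i _
        rw [expand i, Finset.mul_sum]
        apply Finset.sum_congr rfl; intro s _; ring
    _ = ∑ s ∈ range (r + 1), (x ^ (r - s) * (r.choose s : ℚ)) *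
          ∑ i ∈ range (m + 1), (m.choose i : ℚ) * (-1) ^ (m - i) * (i : ℚ) ^ s := by
        rw [Finset.sum_comm]
        apply Finset.sum_congr rfl; intro s _; rw [Finset.mul_sum]
    _ = 0 := by
        apply Finset.sum_eq_zero; intro s hs
        rw [findiff_mono s m (by simp at hs; omega), mul_zero]

noncomputable def Nmat (n k : ℕ) : ℚ := (Nat.choose n k : ℚ) * (-(k : ℚ)) ^ (n - k)
noncomputable def Mmat (k j : ℕ) : ℚ := (Nat.choose k j : ℚ) * abelCoeff k j

lemma Nmat_zero {n k : ℕ} (h : n < k) : Nmat n k = 0 := by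
  simp [Nmat, Nat.choose_eq_zero_of_lt h]

lemma Mmat_zero {k j : ℕ} (h : k < j) : Mmat k j = 0 := by
  simp [Mmat, Nat.choose_eq_zero_of_lt h]

lemma NM (n j : ℕ) :
    ∑ k ∈ range (n + 1), Nmat n k * Mmat k j = if j = n then 1 else 0 := by
  rcases lt_trichotomy j n with hjn | rfl | hnj
  · -- j < n
    rw [if_neg (by omega)]
    set m := n - j with hm
    have hmn : j + m = n := by omega
    have hm1 : 1 ≤ m := by omega
    -- split the sum at j
    have hsplit : ∑ k ∈ range (n + 1), Nmat n k * Mmat k j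
        = ∑ k ∈ Finset.Ico j (n + 1), Nmat n k * Mmat k j := by
      rw [Finset.range_eq_Ico, ← Finset.sum_Ico_consecutive _ (Nat.zero_le j) (by omega)]
      have : ∑ k ∈ Finset.Ico 0 j, Nmat n k * Mmat k j = 0 := by
        apply Finset.sum_eq_zero; intro k hk
        simp only [Finset.mem_Ico] at hk
        rw [Mmat_zero hk.2, mul_zero]
      rw [this, zero_add]
    rw [hsplit, Finset.sum_Ico_eq_sum_range]
    have hrange : n + 1 - j = m + 1 := by omega
    rw [hrange]
    have hterm : ∀ i ∈ range (m + 1), Nmat n (j + i) * Mmat (j + i) j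
        = ((Nat.choose n j : ℚ) * (j : ℚ)) *
          ((m.choose i : ℚ) * (-1) ^ (m - i) * ((j : ℚ) + (i : ℚ)) ^ (m - 1)) := by
      intro i hi
      simp only [Finset.mem_range] at hi
      have hin : j + i ≤ n := by omega
      have hchoose : (Nat.choose n (j + i) : ℚ) * (Nat.choose (j + i) j : ℚ)
          = (Nat.choose n j : ℚ) * (m.choose i : ℚ) := by
        have := Nat.choose_mul (n := n) (Nat.le_add_right j i)
        have h2 : n - j = m := hm.symm
        rw [h2, Nat.add_sub_cancel_left] at this
        exact_mod_cast congrArg (Nat.cast (R := ℚ)) this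
      have hexp : n - (j + i) = m - i := by omega
      have hneg : (-(((j : ℚ) + i))) ^ (m - i) = (-1) ^ (m - i) * ((j : ℚ) + i) ^ (m - i) := by
        rw [neg_pow]
      rcases Nat.eq_zero_or_pos i with rfl | hi1
      · -- i = 0
        simp only [Nmat, Mmat, abelCoeff, Nat.add_zero, if_pos rfl, Nat.cast_zero, add_zero,
          Nat.sub_zero, mul_one]
        rw [← hm, if_pos trivial]
        simp only [Nat.choose_self, Nat.cast_one, mul_one, Nat.choose_zero_right]
        have : (-(j : ℚ)) ^ m = (-1) ^ m * (j : ℚ) ^ m := by rw [neg_pow]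
        rw [this]
        have hjj : (j : ℚ) ^ m = (j : ℚ) * (j : ℚ) ^ (m - 1) := by
          rcases Nat.eq_zero_or_pos j with rfl | hj1
          · simp [zero_pow (by omega : m ≠ 0)]
          · conv_lhs => rw [show m = 1 + (m - 1) by omega, pow_add, pow_one]
        rw [hjj]
        ring
      · -- i ≥ 1
        have hne : j ≠ j + i := by omega
        simp only [Nmat, Mmat, abelCoeff, if_neg hne]
        have hsub : j + i - j - 1 = i - 1 := by omega
        rw [hsub, hexp]
        push_cast
        rw [hneg]
        have hpow : ((j : ℚ) + i) ^ (i - 1) * ((j : ℚ) + i) ^ (m - i)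
            = ((j : ℚ) + i) ^ (m - 1) := by
          rw [← pow_add]; congr 1; omega
        calc (Nat.choose n (j+i) : ℚ) * ((-1) ^ (m-i) * ((j:ℚ)+i) ^ (m-i)) *
                ((Nat.choose (j+i) j : ℚ) * ((j:ℚ) * ((j:ℚ)+i) ^ (i-1)))
            = ((Nat.choose n (j+i) : ℚ) * (Nat.choose (j+i) j : ℚ)) * (j:ℚ) * (-1) ^ (m-i) *
                (((j:ℚ)+i) ^ (i-1) * ((j:ℚ)+i) ^ (m-i)) := by ring
          _ = ((Nat.choose n j : ℚ) * (j:ℚ)) *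
                ((m.choose i : ℚ) * (-1) ^ (m-i) * ((j:ℚ)+i) ^ (m-1)) := by
              rw [hchoose, hpow]; ring
    rw [Finset.sum_congr rfl hterm, ← Finset.mul_sum]
    have := findiff_shift (j : ℚ) (m - 1) m (by omega)
    rw [this, mul_zero]
  · -- j = n
    rw [if_pos rfl]
    rw [Finset.sum_eq_single_of_mem j (by simp)]
    · simp [Nmat, Mmat, abelCoeff]
    · intro k hk hkj
      simp only [Finset.mem_range] at hk
      rw [Mmat_zero (by omega), mul_zero]
  · -- n < j
    rw [if_neg (by omega)]
    apply Finset.sum_eq_zero; intro k hk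
    simp only [Finset.mem_range] at hk
    rw [Mmat_zero (by omega), mul_zero]

lemma NM_big (L n j : ℕ) (hn : n < L) :
    ∑ k ∈ range L, Nmat n k * Mmat k j = if j = n then 1 else 0 := by
  rw [← NM n j]
  symm
  apply Finset.sum_subset
  · intro k hk; simp only [Finset.mem_range] at *; omega
  · intro k _ hk
    simp only [Finset.mem_range, not_lt] at hk
    rw [Nmat_zero (by omega), zero_mul]

lemma MN (n j : ℕ) :
    ∑ k ∈ range (n + 1), Mmat n k * Nmat k j = if j = n then 1 else 0 := by
  rcases le_or_gt j n with hjn | hnj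
  · set L := n + 1
    set A : Matrix (Fin L) (Fin L) ℚ := fun p q => Nmat p q with hA
    set B : Matrix (Fin L) (Fin L) ℚ := fun p q => Mmat p q with hB
    have hAB : A * B = 1 := by
      ext p q
      rw [Matrix.mul_apply, Matrix.one_apply]
      rw [Fin.sum_univ_eq_sum_range (fun k => Nmat p k * Mmat k q)]
      rw [NM_big L p q p.isLt]
      by_cases h : (q : ℕ) = (p : ℕ)
      · rw [if_pos h, if_pos (by exact (Fin.ext h).symm)]
      · rw [if_neg h, if_neg (by intro hc; exact h (by rw [hc]))]
    have hBA : B * A = 1 := mul_eq_one_comm.mp hAB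
    have := congrFun (congrFun hBA ⟨n, by omega⟩) ⟨j, by omega⟩
    rw [Matrix.mul_apply, Matrix.one_apply] at this
    rw [Fin.sum_univ_eq_sum_range (fun k => Mmat n k * Nmat k j)] at this
    rw [this]
    by_cases h : j = n
    · rw [if_pos (by exact Fin.ext h.symm), if_pos h]
    · rw [if_neg (by intro hc; exact h (congrArg Fin.val hc).symm), if_neg h]
  · rw [if_neg (by omega)]
    apply Finset.sum_eq_zero; intro k hk
    simp only [Finset.mem_range] at hk
    rw [Nmat_zero (by omega), mul_zero]

/-- generic inversion direction -/
lemma inv_dir {R : Type*} [CommRing R] [Algebra ℚ R] (P Q : ℕ → ℕ → ℚ)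
    (hP0 : ∀ j k, j < k → P j k = 0)
    (hQP : ∀ n k, ∑ j ∈ range (n + 1), Q n j * P j k = if k = n then 1 else 0)
    (a b : ℕ → R) (h : ∀ n, b n = ∑ k ∈ range (n + 1), algebraMap ℚ R (P n k) * a k) :
    ∀ n, a n = ∑ j ∈ range (n + 1), algebraMap ℚ R (Q n j) * b j := by
  intro n
  have step1 : ∀ j ∈ range (n + 1),
      algebraMap ℚ R (Q n j) * b j
      = ∑ k ∈ range (n + 1), algebraMap ℚ R (Q n j * P j k) * a k := by
    intro j hj
    simp only [Finset.mem_range] at hj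
    rw [h j, Finset.mul_sum]
    rw [Finset.sum_subset (Finset.range_subset_range.mpr (by omega : j + 1 ≤ n + 1))]
    · apply Finset.sum_congr rfl; intro k _
      rw [map_mul]; ring
    · intro k _ hk
      simp only [Finset.mem_range, not_lt] at hk
      rw [hP0 j k (by omega), map_zero, zero_mul, mul_zero]
  rw [Finset.sum_congr rfl step1, Finset.sum_comm]
  have step2 : ∀ k ∈ range (n + 1),
      ∑ j ∈ range (n + 1), algebraMap ℚ R (Q n j * P j k) * a k
      = (if k = n then a k else 0) := by
    intro k hk
    rw [← Finset.sum_mul, ← map_sum, hQP n k]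
    by_cases hkn : k = n
    · rw [if_pos hkn, if_pos hkn, map_one, one_mul]
    · rw [if_neg hkn, if_neg hkn, map_zero, zero_mul]
  rw [Finset.sum_congr rfl step2, Finset.sum_ite_eq' (range (n + 1)) n a,
    if_pos (by simp)]

/-- Abel inverse relation: for sequences `(a_n)`, `(b_n)` in a commutative
`ℚ`-algebra, `a_n = ∑_{j=0}^n binomial(n,j)(-j)^{n-j} b_j` for all `n` iff
`b_n = ∑_{j=0}^n binomial(n,j)·j·n^{n-j-1} a_j` for all `n` (with
`j·n^{n-j-1}` interpreted as `1` when `j = n`). -/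
theorem abel_inverse_relation {R : Type*} [CommRing R] [Algebra ℚ R]
    (a b : ℕ → R) :
    (∀ n : ℕ, a n = ∑ j ∈ Finset.range (n + 1),
        algebraMap ℚ R ((Nat.choose n j : ℚ) * (-(j : ℚ)) ^ (n - j)) * b j)
    ↔ (∀ n : ℕ, b n = ∑ j ∈ Finset.range (n + 1),
        algebraMap ℚ R ((Nat.choose n j : ℚ) * abelCoeff n j) * a j) := by
  constructor
  · intro h
    exact inv_dir Nmat Mmat (fun j k hjk => Nmat_zero hjk) MN b a h
  · intro h
    exact inv_dir Mmat Nmat (fun j k hjk => Mmat_zero hjk) NM a b h
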